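/- Let X be a finitely generated A_n-module annihilated by t (so that X is a kG-module), and let φ: X → A_n^{⊕r} be an injective A_n-linear map for some non-negative integer r. Writing C for the cokernel of φ, there is an isomorphism of A_{n-1}-modules C/t^{n-1}C ≅ A_{n-1}^{⊕r}; in particular, C/t^{n-1}C is a projective A_{n-1}-module. -/

import Mathlib

open scoped TensorProduct DirectSum

noncomputable section

variable (S : Type) [CommRing S] [IsDomain S] [IsDiscreteValuationRing S]
variable (t : S)
variable (G : Type) [Group G] [Fintype G]

/-- `Rq n` is the quotient ring `R_n = S/(t^n)`. -/
abbrev Rq (n : ℕ) : Type := S ⧸ Ideal.span {t ^ n}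

/-- `Aq n` is the group algebra `A_n = R_n G`. -/
abbrev Aq (n : ℕ) : Type := MonoidAlgebra (Rq S t n) G

/-- The canonical surjection `R_n → R_i` for `i ≤ n`. -/
def Rmap (i n : ℕ) (h : i ≤ n) : Rq S t n →+* Rq S t i :=
  Ideal.Quotient.factor (Ideal.span_singleton_le_span_singleton.mpr (pow_dvd_pow t h))

/-- The canonical surjection `A_n → A_i` for `i ≤ n`, induced by `R_n → R_i`. -/
def Amap (i n : ℕ) (h : i ≤ n) : Aq S t G n →+* Aq S t G i :=
  letI : Algebra (Rq S t n) (Aq S t G i) :=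
    RingHom.toAlgebra' ((algebraMap (Rq S t i) (Aq S t G i)).comp (Rmap S t i n h))
      (fun r x => Algebra.commutes (Rmap S t i n h r) x)
  ((MonoidAlgebra.lift (Rq S t n) (Aq S t G i) G) (MonoidAlgebra.of (Rq S t i) G)).toRingHom

/-- The augmentation map `A_n → R_n`, `Σ r_g g ↦ Σ r_g`. -/
def aug (n : ℕ) : Aq S t G n →+* Rq S t n :=
  ((MonoidAlgebra.lift (Rq S t n) (Rq S t n) G) 1).toRingHom

/-- The image of `t` in `R_n`. -/
def tbar (n : ℕ) : Rq S t n := Ideal.Quotient.mk _ t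

/-- The norm element `Σ_{g ∈ G} g` of `A_n`. -/
def sigmaEl (n : ℕ) : Aq S t G n := ∑ g : G, MonoidAlgebra.of (Rq S t n) G g

/-- The element `t^{i-1} Σ_{g ∈ G} g` of `A_i`. -/
def wEl (i : ℕ) : Aq S t G i :=
  algebraMap (Rq S t i) (Aq S t G i) (tbar S t i ^ (i - 1)) * sigmaEl S t G i

/-- `W_i = A_i/⟨t^{i-1} Σ_{g∈G} g⟩`. -/
abbrev Wmod (i : ℕ) : Type :=
  Aq S t G i ⧸ Submodule.span (Aq S t G i) {wEl S t G i}

/-- The submodule `t^m X` of an `A_n`-module `X`. -/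
def tSub (n m : ℕ) (X : Type) [AddCommGroup X] [Module (Aq S t G n) X] :
    Submodule (Aq S t G n) X :=
  Submodule.span (Aq S t G n)
    (Set.range fun x : X => algebraMap (Rq S t n) (Aq S t G n) (tbar S t n ^ m) • x)

set_option linter.unusedSectionVars false

namespace Statement10Aux

lemma Rmap_mk (i n : ℕ) (h : i ≤ n) (x : S) :
    Rmap S t i n h (Ideal.Quotient.mk _ x) = Ideal.Quotient.mk _ x :=
  Ideal.Quotient.factor_mk _ x

lemma Rmap_surjective (i n : ℕ) (h : i ≤ n) : Function.Surjective (Rmap S t i n h) := by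
  intro y
  obtain ⟨x, rfl⟩ := Ideal.Quotient.mk_surjective y
  exact ⟨Ideal.Quotient.mk _ x, Rmap_mk S t i n h x⟩

lemma dvd_of_Rmap_eq_zero (n : ℕ) (r : Rq S t n)
    (h : Rmap S t (n - 1) n (Nat.sub_le n 1) r = 0) :
    ∃ u, r = tbar S t n ^ (n - 1) * u := by
  obtain ⟨s, rfl⟩ := Ideal.Quotient.mk_surjective r
  rw [Rmap_mk, Ideal.Quotient.eq_zero_iff_mem, Ideal.mem_span_singleton] at h
  obtain ⟨u, rfl⟩ := h
  exact ⟨Ideal.Quotient.mk _ u, by rw [map_mul, tbar, ← map_pow]⟩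

lemma dvd_of_tbar_mul_eq_zero (ht : Irreducible t) (n : ℕ) (hn : 1 ≤ n) (r : Rq S t n)
    (h : tbar S t n * r = 0) : ∃ u, r = tbar S t n ^ (n - 1) * u := by
  obtain ⟨s, rfl⟩ := Ideal.Quotient.mk_surjective r
  have h2 : t * s ∈ Ideal.span {t ^ n} := by
    rw [← Ideal.Quotient.eq_zero_iff_mem, map_mul]
    exact h
  rw [Ideal.mem_span_singleton] at h2
  obtain ⟨u, hu⟩ := h2
  have hpow : t * t ^ (n - 1) = t ^ n := by
    rw [← pow_succ', Nat.sub_add_cancel hn]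
  have hs : s = t ^ (n - 1) * u := by
    apply mul_left_cancel₀ ht.ne_zero
    rw [hu, ← hpow, mul_assoc]
  exact ⟨Ideal.Quotient.mk _ u, by rw [hs, map_mul, tbar, ← map_pow]⟩

lemma exists_smul (n : ℕ) (c : Rq S t n) (a : Aq S t G n)
    (h : ∀ g : G, ∃ u, a.coeff g = c * u) :
    ∃ b : Aq S t G n, a = algebraMap (Rq S t n) (Aq S t G n) c • b := by
  classical
  set d : Rq S t n → Rq S t n :=
    fun r => if r = 0 then 0 else if h' : ∃ u, r = c * u then h'.choose else 0 with hd
  refine ⟨MonoidAlgebra.ofCoeff (Finsupp.mapRange d (by simp [hd]) a.coeff), ?_⟩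
  ext g
  rw [algebraMap_smul, MonoidAlgebra.coeff_smul_apply, MonoidAlgebra.coeff_ofCoeff,
    Finsupp.mapRange_apply, smul_eq_mul]
  by_cases h0 : a.coeff g = 0
  · simp [hd, h0]
  · have h' := h g
    simp only [hd, h0, if_false, dif_pos h']
    exact h'.choose_spec

lemma Amap_single (i n : ℕ) (h : i ≤ n) (g : G) (r : Rq S t n) :
    Amap S t G i n h (MonoidAlgebra.single g r) =
      MonoidAlgebra.single g (Rmap S t i n h r) := by
  letI : Algebra (Rq S t n) (Aq S t G i) :=
    RingHom.toAlgebra' ((algebraMap (Rq S t i) (Aq S t G i)).comp (Rmap S t i n h))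
      (fun r x => Algebra.commutes (Rmap S t i n h r) x)
  show ((MonoidAlgebra.lift (Rq S t n) (Aq S t G i) G)
      (MonoidAlgebra.of (Rq S t i) G)).toRingHom (MonoidAlgebra.single g r) = _
  rw [AlgHom.toRingHom_eq_coe, RingHom.coe_coe, MonoidAlgebra.lift_single, Algebra.smul_def,
    RingHom.algebraMap_toAlgebra', RingHom.comp_apply, MonoidAlgebra.coe_algebraMap,
    Function.comp_apply]
  show MonoidAlgebra.single 1 _ * MonoidAlgebra.single g 1 = _
  rw [MonoidAlgebra.single_mul_single, one_mul, mul_one]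
  simp

lemma Amap_apply (i n : ℕ) (h : i ≤ n) (a : Aq S t G n) (g : G) :
    (Amap S t G i n h a).coeff g = Rmap S t i n h (a.coeff g) := by
  induction a using MonoidAlgebra.induction with
  | zero => simp
  | single_add g' r f _ _ ih =>
    rw [map_add, MonoidAlgebra.coeff_add, MonoidAlgebra.coeff_add, Finsupp.add_apply,
      Finsupp.add_apply, map_add, ih]
    show (Amap S t G i n h (MonoidAlgebra.single g' r)).coeff g + _ = _
    rw [Amap_single]
    congr 1
    rcases eq_or_ne g' g with rfl | hne
    · rw [MonoidAlgebra.coeff_single, MonoidAlgebra.coeff_single, Finsupp.single_eq_same,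
        Finsupp.single_eq_same]
    · rw [MonoidAlgebra.coeff_single, MonoidAlgebra.coeff_single, Finsupp.single_eq_of_ne' hne,
        Finsupp.single_eq_of_ne' hne, map_zero]

lemma Amap_surjective (i n : ℕ) (h : i ≤ n) : Function.Surjective (Amap S t G i n h) := by
  intro a'
  induction a' using MonoidAlgebra.induction with
  | zero => exact ⟨0, map_zero _⟩
  | single_add g' r' f _ _ ih =>
    obtain ⟨b, hb⟩ := ih
    obtain ⟨r, hr⟩ := Rmap_surjective S t i n h r'
    exact ⟨MonoidAlgebra.single g' r + b, by rw [map_add, Amap_single, hr, hb]⟩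

end Statement10Aux

namespace Statement10Aux

lemma Rmap_tbar_pow (n : ℕ) :
    Rmap S t (n - 1) n (Nat.sub_le n 1) (tbar S t n ^ (n - 1)) = 0 := by
  rw [map_pow, tbar, Rmap_mk, ← map_pow, Ideal.Quotient.eq_zero_iff_mem]
  exact Ideal.mem_span_singleton_self _

lemma Amap_cEl (n : ℕ) :
    Amap S t G (n - 1) n (Nat.sub_le n 1)
      (algebraMap (Rq S t n) (Aq S t G n) (tbar S t n ^ (n - 1))) = 0 := by
  have h1 : algebraMap (Rq S t n) (Aq S t G n) (tbar S t n ^ (n - 1)) =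
      MonoidAlgebra.single 1 (tbar S t n ^ (n - 1)) := by
    rw [MonoidAlgebra.coe_algebraMap]
    simp
  rw [h1, Amap_single, Rmap_tbar_pow]
  simp

/-- The coordinatewise reduction map, as a semilinear map. -/
def fmap (n r : ℕ) :
    (Fin r → Aq S t G n) →ₛₗ[Amap S t G (n - 1) n (Nat.sub_le n 1)]
      (Fin r → Aq S t G (n - 1)) where
  toFun v i := Amap S t G (n - 1) n (Nat.sub_le n 1) (v i)
  map_add' v w := by funext i; exact map_add _ _ _
  map_smul' a v := by
    funext i
    simp only [Pi.smul_apply, smul_eq_mul, map_mul, RingHom.coe_coe]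

lemma fmap_apply (n r : ℕ) (v : Fin r → Aq S t G n) (i : Fin r) :
    fmap S t G n r v i = Amap S t G (n - 1) n (Nat.sub_le n 1) (v i) := rfl

end Statement10Aux


open Statement10Aux


set_option maxHeartbeats 1000000 in
/-- Let `X` be a finitely generated `A_n`-module annihilated by `t`, and
let `φ : X → A_n^{⊕r}` be an injective `A_n`-linear map with cokernel `C`.  Then there is an
isomorphism of `A_{n-1}`-modules `C/t^{n-1}C ≅ A_{n-1}^{⊕r}`; in particular `C/t^{n-1}C`
is a projective `A_{n-1}`-module. -/
theorem statement10 (ht : Irreducible t) (n : ℕ) (hn : 1 ≤ n)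
    (X : Type) [AddCommGroup X] [Module (Aq S t G n) X] [Module.Finite (Aq S t G n) X]
    (hann : ∀ x : X, algebraMap (Rq S t n) (Aq S t G n) (tbar S t n) • x = 0)
    (r : ℕ) (φ : X →ₗ[Aq S t G n] (Fin r → Aq S t G n)) (hφ : Function.Injective φ) :
    ∃ inst : Module (Aq S t G (n - 1))
        (((Fin r → Aq S t G n) ⧸ LinearMap.range φ) ⧸
          tSub S t G n (n - 1) ((Fin r → Aq S t G n) ⧸ LinearMap.range φ)),
      (∀ (a : Aq S t G n)
        (q : ((Fin r → Aq S t G n) ⧸ LinearMap.range φ) ⧸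
          tSub S t G n (n - 1) ((Fin r → Aq S t G n) ⧸ LinearMap.range φ)),
        letI := inst
        Amap S t G (n - 1) n (Nat.sub_le n 1) a • q = a • q) ∧
      letI := inst
      Nonempty
        ((((Fin r → Aq S t G n) ⧸ LinearMap.range φ) ⧸
            tSub S t G n (n - 1) ((Fin r → Aq S t G n) ⧸ LinearMap.range φ))
          ≃ₗ[Aq S t G (n - 1)] (Fin r → Aq S t G (n - 1))) ∧
      Module.Projective (Aq S t G (n - 1))
        (((Fin r → Aq S t G n) ⧸ LinearMap.range φ) ⧸
          tSub S t G n (n - 1) ((Fin r → Aq S t G n) ⧸ LinearMap.range φ)) := by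
  classical
  haveI : RingHomSurjective (Amap S t G (n - 1) n (Nat.sub_le n 1)) :=
    ⟨Amap_surjective S t G (n - 1) n (Nat.sub_le n 1)⟩
  -- divisibility by t^{n-1} from vanishing under Amap
  have hdvd : ∀ a : Aq S t G n, Amap S t G (n - 1) n (Nat.sub_le n 1) a = 0 →
      ∃ b, a = algebraMap (Rq S t n) (Aq S t G n) (tbar S t n ^ (n - 1)) • b := by
    intro a ha
    refine exists_smul S t G n _ a fun g => ?_
    apply dvd_of_Rmap_eq_zero
    have h1 : (Amap S t G (n - 1) n (Nat.sub_le n 1) a).coeff g = 0 := by rw [ha]; rfl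
    rwa [Amap_apply] at h1
  -- the range of φ is contained in t^{n-1} M
  have hNle : LinearMap.range φ ≤ tSub S t G n (n - 1) (Fin r → Aq S t G n) := by
    rintro _ ⟨x, rfl⟩
    have h1 : algebraMap (Rq S t n) (Aq S t G n) (tbar S t n) • φ x = 0 := by
      rw [← map_smul, hann, map_zero]
    have h2 : ∀ i, ∃ b, φ x i =
        algebraMap (Rq S t n) (Aq S t G n) (tbar S t n ^ (n - 1)) • b := by
      intro i
      refine exists_smul S t G n _ _ fun g => ?_
      apply dvd_of_tbar_mul_eq_zero S t ht n hn
      have h3 : algebraMap (Rq S t n) (Aq S t G n) (tbar S t n) • φ x i = 0 := by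
        rw [← Pi.smul_apply, h1]; rfl
      rw [algebraMap_smul] at h3
      rw [← smul_eq_mul, ← MonoidAlgebra.coeff_smul_apply, h3, MonoidAlgebra.coeff_zero,
        Finsupp.zero_apply]
    choose w hw using h2
    refine Submodule.subset_span ⟨w, ?_⟩
    funext i
    exact (hw i).symm
  -- t^{n-1} M is the kernel of the coordinatewise reduction
  have hTker : tSub S t G n (n - 1) (Fin r → Aq S t G n) =
      LinearMap.ker (fmap S t G n r) := by
    apply le_antisymm
    · rw [tSub, Submodule.span_le]
      rintro _ ⟨v, rfl⟩
      simp only [SetLike.mem_coe, LinearMap.mem_ker]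
      rw [LinearMap.map_smulₛₗ, Amap_cEl, zero_smul]
    · intro v hv
      rw [LinearMap.mem_ker] at hv
      have h2 : ∀ i, ∃ b, v i =
          algebraMap (Rq S t n) (Aq S t G n) (tbar S t n ^ (n - 1)) • b := by
        intro i
        apply hdvd
        exact congrFun hv i
      choose w hw using h2
      refine Submodule.subset_span ⟨w, ?_⟩
      funext i
      exact (hw i).symm
  have hfsurj : Function.Surjective (fmap S t G n r) := by
    intro u
    choose w hw using fun i => Amap_surjective S t G (n - 1) n (Nat.sub_le n 1) (u i)
    exact ⟨w, funext hw⟩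
  -- identify t^{n-1} (M/N) with the image of t^{n-1} M
  have hquot : tSub S t G n (n - 1) ((Fin r → Aq S t G n) ⧸ LinearMap.range φ) =
      (tSub S t G n (n - 1) (Fin r → Aq S t G n)).map (LinearMap.range φ).mkQ := by
    rw [tSub, tSub, Submodule.map_span, ← Set.range_comp]
    congr 1
    have hc : (LinearMap.range φ).mkQ ∘
        (fun x : Fin r → Aq S t G n =>
          algebraMap (Rq S t n) (Aq S t G n) (tbar S t n ^ (n - 1)) • x) =
        (fun y : (Fin r → Aq S t G n) ⧸ LinearMap.range φ =>
          algebraMap (Rq S t n) (Aq S t G n) (tbar S t n ^ (n - 1)) • y) ∘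
          (LinearMap.range φ).mkQ := by
      funext x
      exact map_smul _ _ _
    rw [hc, Function.Surjective.range_comp (Submodule.mkQ_surjective _)]
  let e1 := (Submodule.quotEquivOfEq _ _ hquot).trans
    (Submodule.quotientQuotientEquivQuotientSup (LinearMap.range φ)
      (tSub S t G n (n - 1) (Fin r → Aq S t G n)))
  let e2 := Submodule.quotEquivOfEq _ _ (sup_eq_right.mpr hNle)
  let e3 := e1.trans e2
  let fbar := (tSub S t G n (n - 1) (Fin r → Aq S t G n)).liftQ (fmap S t G n r) hTker.le
  have hfbij : Function.Bijective fbar := by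
    constructor
    · rw [← LinearMap.ker_eq_bot]
      exact Submodule.ker_liftQ_eq_bot' _ _ hTker
    · intro u
      obtain ⟨v, hv⟩ := hfsurj u
      exact ⟨Submodule.Quotient.mk v, hv⟩
  let E : (((Fin r → Aq S t G n) ⧸ LinearMap.range φ) ⧸
        tSub S t G n (n - 1) ((Fin r → Aq S t G n) ⧸ LinearMap.range φ)) ≃+
      (Fin r → Aq S t G (n - 1)) :=
    e3.toAddEquiv.trans (AddEquiv.ofBijective fbar.toAddMonoidHom hfbij)
  have hsemi : ∀ (a : Aq S t G n) q,
      E (a • q) = Amap S t G (n - 1) n (Nat.sub_le n 1) a • E q := by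
    intro a q
    show fbar (e3 (a • q)) = Amap S t G (n - 1) n (Nat.sub_le n 1) a • fbar (e3 q)
    rw [map_smul]
    exact fbar.map_smulₛₗ a _
  letI instM : Module (Aq S t G (n - 1))
      (((Fin r → Aq S t G n) ⧸ LinearMap.range φ) ⧸
        tSub S t G n (n - 1) ((Fin r → Aq S t G n) ⧸ LinearMap.range φ)) :=
    { smul := fun a q => E.symm (a • E q)
      one_smul := fun q => by
        show E.symm ((1 : Aq S t G (n - 1)) • E q) = q
        rw [one_smul, AddEquiv.symm_apply_apply]
      mul_smul := fun a b q => by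
        show E.symm ((a * b) • E q) = E.symm (a • E (E.symm (b • E q)))
        rw [AddEquiv.apply_symm_apply, mul_smul]
      smul_zero := fun a => by
        show E.symm (a • E 0) = 0
        rw [map_zero, smul_zero, map_zero]
      smul_add := fun a q q' => by
        show E.symm (a • E (q + q')) = E.symm (a • E q) + E.symm (a • E q')
        rw [map_add, smul_add, map_add]
      add_smul := fun a b q => by
        show E.symm ((a + b) • E q) = E.symm (a • E q) + E.symm (b • E q)
        rw [add_smul, map_add]
      zero_smul := fun q => by
        show E.symm ((0 : Aq S t G (n - 1)) • E q) = 0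
        rw [zero_smul, map_zero] }
  have hcomp : ∀ (a : Aq S t G n)
      (q : ((Fin r → Aq S t G n) ⧸ LinearMap.range φ) ⧸
        tSub S t G n (n - 1) ((Fin r → Aq S t G n) ⧸ LinearMap.range φ)),
      Amap S t G (n - 1) n (Nat.sub_le n 1) a • q = a • q := by
    intro a q
    show E.symm (Amap S t G (n - 1) n (Nat.sub_le n 1) a • E q) = a • q
    rw [← hsemi, AddEquiv.symm_apply_apply]
  let L : (((Fin r → Aq S t G n) ⧸ LinearMap.range φ) ⧸
        tSub S t G n (n - 1) ((Fin r → Aq S t G n) ⧸ LinearMap.range φ))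
      ≃ₗ[Aq S t G (n - 1)] (Fin r → Aq S t G (n - 1)) :=
    { toFun := E
      map_add' := fun q q' => map_add E q q'
      map_smul' := fun a q => by
        show E (E.symm (a • E q)) = a • E q
        exact E.apply_symm_apply _
      invFun := E.symm
      left_inv := E.left_inv
      right_inv := E.right_inv }
  exact ⟨instM, hcomp, ⟨L⟩, Module.Projective.of_equiv L.symm⟩


end
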